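/- Let c_1,…,c_n be reals and let d_1,…,d_n be reals with d_1 = d_n = 1 and d_i ≠ 0 for all i. Then G·C·D = C − F·D; equivalently, writing A = F·D, one has G·C·G^{−1} = C − A. -/

import Mathlib

open Finset Matrix

/-- The matrix `D` with entries `d_{ij}`: `0` for `i < j`, `d_i` for `i = j`, and
`-d_j · (∏_{k=j+1}^{i-1} (1 - d_k)) · d_i` for `i > j`. -/
def Dmat (n : ℕ) (d : Fin n → ℝ) : Matrix (Fin n) (Fin n) ℝ :=
  Matrix.of fun i j =>
    if i < j then 0
    else if i = j then d i
    else -(d j) * (∏ k ∈ Finset.Ioo j i, (1 - d k)) * d i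

/-- The lower-triangular matrix `G` with `G_{ii} = 1/d_i`, `G_{ij} = 1` for `i > j`. -/
noncomputable def Gmat (n : ℕ) (d : Fin n → ℝ) : Matrix (Fin n) (Fin n) ℝ :=
  Matrix.of fun i j => if i = j then 1 / d i else if j < i then 1 else 0

/-- The matrix `F` with `F_{ij} = c_i - c_j` for `i > j` and `0` otherwise. -/
def Fmat (n : ℕ) (c : Fin n → ℝ) : Matrix (Fin n) (Fin n) ℝ :=
  Matrix.of fun i j => if j < i then c i - c j else 0

lemma keyNat (e : ℕ → ℝ) (j : ℕ) (i : ℕ) :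
    (∏ k ∈ Finset.Ioo j i, (1 - e k)) +
      ∑ k ∈ Finset.Ioo j i, (∏ m ∈ Finset.Ioo j k, (1 - e m)) * e k = 1 := by
  induction i with
  | zero => simp
  | succ i ih =>
    rcases le_or_gt i j with h | h
    · have : Finset.Ioo j (i + 1) = ∅ := by
        ext x; simp only [Finset.mem_Ioo, Finset.notMem_empty, iff_false]; omega
      simp [this]
    · have hIoo : Finset.Ioo j (i + 1) = insert i (Finset.Ioo j i) := by
        ext x; simp only [Finset.mem_Ioo, Finset.mem_insert]; omega
      rw [hIoo, Finset.prod_insert (by simp), Finset.sum_insert (by simp)]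
      linear_combination ih

lemma keyFin (n : ℕ) (d : Fin n → ℝ) (j i : Fin n) :
    (∏ k ∈ Finset.Ioo j i, (1 - d k)) +
      ∑ k ∈ Finset.Ioo j i, (∏ m ∈ Finset.Ioo j k, (1 - d m)) * d k = 1 := by
  set e : ℕ → ℝ := fun m => if h : m < n then d ⟨m, h⟩ else 0 with he
  have hprod : ∀ a b : Fin n, (∏ k ∈ Finset.Ioo a b, (1 - d k)) =
      ∏ k ∈ Finset.Ioo (a : ℕ) (b : ℕ), (1 - e k) := by
    intro a b
    rw [← Fin.map_valEmbedding_Ioo, Finset.prod_map]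
    refine Finset.prod_congr rfl fun x _ => ?_
    simp [he, x.isLt]
  have hsum : (∑ k ∈ Finset.Ioo j i, (∏ m ∈ Finset.Ioo j k, (1 - d m)) * d k)
      = ∑ k ∈ Finset.Ioo (j : ℕ) (i : ℕ), (∏ m ∈ Finset.Ioo (j : ℕ) k, (1 - e m)) * e k := by
    rw [← Fin.map_valEmbedding_Ioo, Finset.sum_map]
    refine Finset.sum_congr rfl fun x _ => ?_
    rw [hprod j x]
    simp [he, x.isLt]
  rw [hprod, hsum]
  exact keyNat e j i

lemma DG (n : ℕ) (d : Fin n → ℝ) (hd : ∀ i : Fin n, d i ≠ 0) (i j : Fin n) :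
    ∑ k, (if k = i then 1 / d i else if k < i then 1 else 0) * Dmat n d k j
      = if i = j then 1 else 0 := by
  have h1 : ∀ k : Fin n, (if k = i then 1 / d i else if k < i then 1 else 0) * Dmat n d k j
      = (if k ∈ Finset.Iio i then Dmat n d k j else 0)
        + (if k = i then (1 / d i) * Dmat n d k j else 0) := by
    intro k
    by_cases h : k = i
    · subst h; simp [lt_irrefl]
    · by_cases h2 : k < i <;> simp [h, h2]
  rw [Finset.sum_congr rfl (fun k _ => h1 k), Finset.sum_add_distrib]
  rw [Finset.sum_ite_mem, Finset.univ_inter, Finset.sum_ite_eq' Finset.univ i]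
  simp only [Finset.mem_univ, if_true]
  rcases lt_trichotomy i j with h | h | h
  · rw [if_neg (ne_of_lt h)]
    have h0 : ∀ k ∈ Finset.Iio i, Dmat n d k j = 0 := by
      intro k hk
      have : k < j := lt_trans (Finset.mem_Iio.mp hk) h
      simp [Dmat, this]
    rw [Finset.sum_eq_zero h0]
    simp [Dmat, h]
  · subst h
    rw [if_pos rfl]
    have h0 : ∀ k ∈ Finset.Iio i, Dmat n d k i = 0 := by
      intro k hk
      simp [Dmat, Finset.mem_Iio.mp hk]
    rw [Finset.sum_eq_zero h0]
    have : Dmat n d i i = d i := by simp [Dmat]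
    rw [this]
    field_simp [hd i]
    norm_num
  · rw [if_neg (ne_of_gt h)]
    have hsub : ∑ k ∈ Finset.Iio i, Dmat n d k j = ∑ k ∈ Finset.Ico j i, Dmat n d k j := by
      refine (Finset.sum_subset (fun x hx => ?_) (fun x hx hnx => ?_)).symm
      · exact Finset.mem_Iio.mpr (Finset.mem_Ico.mp hx).2
      · have : x < j := by
          have h1 := Finset.mem_Iio.mp hx
          simp only [Finset.mem_Ico, not_and, not_lt] at hnx
          by_contra hc
          exact absurd (hnx (not_lt.mp hc)) (not_le.mpr h1)
        simp [Dmat, this]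
    rw [hsub, ← Finset.Ioo_insert_left h, Finset.sum_insert (by simp)]
    have hjj : Dmat n d j j = d j := by simp [Dmat]
    have hioo : ∑ k ∈ Finset.Ioo j i, Dmat n d k j
        = -(d j) * ∑ k ∈ Finset.Ioo j i, (∏ m ∈ Finset.Ioo j k, (1 - d m)) * d k := by
      rw [Finset.mul_sum]
      refine Finset.sum_congr rfl fun k hk => ?_
      have hjk : j < k := (Finset.mem_Ioo.mp hk).1
      simp only [Dmat, Matrix.of_apply, if_neg (not_lt_of_gt hjk), if_neg (ne_of_gt hjk)]
      ring
    have hij : Dmat n d i j = -(d j) * (∏ k ∈ Finset.Ioo j i, (1 - d k)) * d i := by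
      simp only [Dmat, Matrix.of_apply, if_neg (not_lt_of_gt h), if_neg (ne_of_gt h)]
    have hlast : (1 / d i) * Dmat n d i j = -(d j) * (∏ k ∈ Finset.Ioo j i, (1 - d k)) := by
      rw [hij]; field_simp [hd i]
    rw [hjj, hioo, hlast]
    linear_combination -(d j) * keyFin n d j i

theorem stmt_7 (n : ℕ) (hn : 2 ≤ n) (c d : Fin n → ℝ)
    (hd1 : d ⟨0, by omega⟩ = 1) (hdn : d ⟨n - 1, by omega⟩ = 1)
    (hd : ∀ i : Fin n, d i ≠ 0) :
    Gmat n d * Matrix.diagonal c * Dmat n d =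
      Matrix.diagonal c - Fmat n c * Dmat n d := by
  ext i j
  rw [Matrix.mul_apply, Matrix.sub_apply, Matrix.mul_apply, Matrix.diagonal_apply]
  simp only [Matrix.mul_diagonal]
  rw [eq_sub_iff_add_eq, ← Finset.sum_add_distrib]
  have hterm : ∀ k : Fin n, Gmat n d i k * c k * Dmat n d k j + Fmat n c i k * Dmat n d k j
      = c i * ((if k = i then 1 / d i else if k < i then 1 else 0) * Dmat n d k j) := by
    intro k
    rcases lt_trichotomy k i with h | h | h
    · simp only [Gmat, Fmat, Matrix.of_apply, if_neg h.ne', if_pos h, if_neg h.ne]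
      ring
    · subst h
      simp only [Gmat, Fmat, Matrix.of_apply, if_pos rfl, if_neg (lt_irrefl k)]
      ring
    · simp only [Gmat, Fmat, Matrix.of_apply, if_neg h.ne, if_neg h.ne', if_neg (lt_asymm h)]
      ring
  rw [Finset.sum_congr rfl (fun k _ => hterm k), ← Finset.mul_sum, DG n d hd i j]
  by_cases h : i = j <;> simp [h]
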